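/- arXiv:2405.00058 — 2 statements merged into one kernel-verified Lean document; each statement's English description precedes it below -/
import Mathlib

section
/- Optimality of the Kalman gain: with P positive semidefinite and S = H P Hᵀ + R positive definite, the map K ↦ trace((I − K H) P (I − K H)ᵀ + K R Kᵀ) over n×m matrices K attains its minimum at K* = P Hᵀ S⁻¹. -/
open Matrix

lemma psd_trace_nonneg {k : ℕ} {M : Matrix (Fin k) (Fin k) ℝ}
    (hM : M.PosSemidef) : 0 ≤ M.trace := by
  rw [Matrix.trace]
  apply Finset.sum_nonneg
  intro i _
  have := hM.2 (Finsupp.single i 1)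
  simpa [dotProduct, Matrix.mulVec, Pi.single_apply, Finset.sum_ite_eq,
    Finset.mul_sum] using this

lemma kalman_key {n m : ℕ}
    (P : Matrix (Fin n) (Fin n) ℝ) (S : Matrix (Fin m) (Fin m) ℝ)
    (H : Matrix (Fin m) (Fin n) ℝ) (Ks K : Matrix (Fin n) (Fin m) ℝ)
    (hPt : Pᵀ = P) (hSt : Sᵀ = S)
    (h1 : Ks * S = P * Hᵀ) (hSdef : S = H * P * Hᵀ + (S - H * P * Hᵀ)) :
    (1 - K * H) * P * (1 - K * H)ᵀ + K * (S - H * P * Hᵀ) * Kᵀ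
      = (P - Ks * S * Ksᵀ) + (K - Ks) * S * (K - Ks)ᵀ := by
  have h2 : S * Ksᵀ = H * P := by
    have := congrArg Matrix.transpose h1
    simpa [Matrix.transpose_mul, hPt, hSt] using this
  simp only [Matrix.transpose_sub, Matrix.transpose_mul, Matrix.transpose_one,
    Matrix.sub_mul, Matrix.mul_sub, Matrix.one_mul, Matrix.mul_one, hPt,
    ← Matrix.mul_assoc]
  have e1 : K * S * Ksᵀ = K * H * P := by
    rw [Matrix.mul_assoc, h2, ← Matrix.mul_assoc]
  have e2 : Ks * S * Kᵀ = P * Hᵀ * Kᵀ := by rw [h1]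
  rw [e1, e2]
  abel

/-- Optimality of the Kalman gain: with `P` positive semidefinite and
`S = H P Hᵀ + R` positive definite, the map
`K ↦ trace((I − K H) P (I − K H)ᵀ + K R Kᵀ)` attains its minimum at `K* = P Hᵀ S⁻¹`. -/
theorem kalman_gain_optimal {n m : ℕ}
    (P : Matrix (Fin n) (Fin n) ℝ) (R : Matrix (Fin m) (Fin m) ℝ)
    (H : Matrix (Fin m) (Fin n) ℝ)
    (hP : P.PosSemidef) (hR : R.PosSemidef)
    (hS : (H * P * Hᵀ + R).PosDef) :
    ∀ K : Matrix (Fin n) (Fin m) ℝ,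
      ((1 - P * Hᵀ * (H * P * Hᵀ + R)⁻¹ * H) * P * (1 - P * Hᵀ * (H * P * Hᵀ + R)⁻¹ * H)ᵀ
          + (P * Hᵀ * (H * P * Hᵀ + R)⁻¹) * R * (P * Hᵀ * (H * P * Hᵀ + R)⁻¹)ᵀ).trace
        ≤ ((1 - K * H) * P * (1 - K * H)ᵀ + K * R * Kᵀ).trace := by
  intro K
  set S := H * P * Hᵀ + R with hSdef
  set Ks := P * Hᵀ * S⁻¹ with hKs
  have hdet : IsUnit S.det := hS.det_pos.ne'.isUnit
  have h1 : Ks * S = P * Hᵀ := by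
    rw [hKs, Matrix.mul_assoc, Matrix.nonsing_inv_mul S hdet, Matrix.mul_one]
  have hPt : Pᵀ = P := by
    have := hP.isHermitian
    simpa [Matrix.conjTranspose, Matrix.IsSymm] using this
  have hSt : Sᵀ = S := by
    have := hS.isHermitian
    simpa [Matrix.conjTranspose, Matrix.IsSymm] using this
  have hRS : R = S - H * P * Hᵀ := by rw [hSdef]; abel
  have key : ∀ L : Matrix (Fin n) (Fin m) ℝ,
      (1 - L * H) * P * (1 - L * H)ᵀ + L * R * Lᵀ
        = (P - Ks * S * Ksᵀ) + (L - Ks) * S * (L - Ks)ᵀ := by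
    intro L
    rw [hRS]
    exact kalman_key P S H Ks L hPt hSt h1 (by abel)
  rw [key K, key Ks]
  simp only [sub_self, Matrix.zero_mul, Matrix.mul_zero, add_zero,
    Matrix.trace_add]
  have hpsd : ((K - Ks) * S * (K - Ks)ᵀ).PosSemidef := by
    have := hS.posSemidef.mul_mul_conjTranspose_same (K - Ks)
    simpa [Matrix.conjTranspose_eq_transpose_of_trivial] using this
  have : 0 ≤ ((K - Ks) * S * (K - Ks)ᵀ).trace := psd_trace_nonneg hpsd
  linarith
end

section
/- Best linear unbiased estimate of the optimal gain form: among affine estimators x̂⁺ = x̂⁻ + K(z − H x̂⁻), the choice K = P Hᵀ (H P Hᵀ + R)⁻¹ minimizes E[‖e⁺‖²] whenever e⁻ has covariance P, v has covariance R, they are uncorrelated, and H P Hᵀ + R is positive definite — regardless of the distributions of e⁻ and v. -/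
open MeasureTheory ProbabilityTheory Matrix

/-- The mean (componentwise expectation) of a random vector. -/
noncomputable def rvMean {k : ℕ} {Ω : Type*} [MeasurableSpace Ω]
    (μ : Measure Ω) (X : Ω → Fin k → ℝ) : Fin k → ℝ :=
  ∫ ω, X ω ∂μ

/-- The covariance matrix `E[(X − E X)(X − E X)ᵀ]` of a random vector. -/
noncomputable def rvCov {k : ℕ} {Ω : Type*} [MeasurableSpace Ω]
    (μ : Measure Ω) (X : Ω → Fin k → ℝ) : Matrix (Fin k) (Fin k) ℝ :=
  Matrix.of fun i j => ∫ ω, (X ω i - rvMean μ X i) * (X ω j - rvMean μ X j) ∂μ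

lemma mulL2_integrable {Ω : Type*} [MeasurableSpace Ω] {μ : Measure Ω} {f g : Ω → ℝ}
    (hf : MemLp f 2 μ) (hg : MemLp g 2 μ) : Integrable (fun ω => f ω * g ω) μ := by
  have h := (((hf.add hg).integrable_sq).sub hf.integrable_sq).sub hg.integrable_sq
  have h2 := h.const_mul (1/2 : ℝ)
  have he : (fun ω => f ω * g ω)
      = fun ω => (1/2 : ℝ) * ((f + g) ω ^ 2 - f ω ^ 2 - g ω ^ 2) := by
    funext ω; simp only [Pi.add_apply]; ring
  rw [he]; exact h2

lemma eval_memL2 {Ω : Type*} [MeasurableSpace Ω] {μ : Measure Ω} {k : ℕ}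
    {X : Ω → Fin k → ℝ} (hX : MemLp X 2 μ) (i : Fin k) :
    MemLp (fun ω => X ω i) 2 μ :=
  (ContinuousLinearMap.proj (R := ℝ) (φ := fun _ : Fin k => ℝ) i).comp_memLp' hX

lemma integral_eval {Ω : Type*} [MeasurableSpace Ω] {μ : Measure Ω} {k : ℕ}
    {X : Ω → Fin k → ℝ} (hX : Integrable X μ) (i : Fin k) :
    ∫ ω, X ω i ∂μ = (∫ ω, X ω ∂μ) i :=
  (ContinuousLinearMap.proj (R := ℝ) (φ := fun _ : Fin k => ℝ) i).integral_comp_comm hX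

lemma integral_sq_sum {Ω : Type*} [MeasurableSpace Ω] (μ : Measure Ω) {ι : Type*} [Fintype ι]
    (u : ι → Ω → ℝ) (hu : ∀ i, MemLp (u i) 2 μ) (c : ι → ℝ) :
    ∫ ω, (∑ i, c i * u i ω) ^ 2 ∂μ = ∑ i, ∑ j, c i * c j * ∫ ω, u i ω * u j ω ∂μ := by
  have hmul : ∀ i j : ι, Integrable (fun ω => u i ω * u j ω) μ :=
    fun i j => mulL2_integrable (hu i) (hu j)
  have hstep : ∀ ω, (∑ i, c i * u i ω) ^ 2 = ∑ i, ∑ j, c i * c j * (u i ω * u j ω) := by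
    intro ω
    rw [sq, Finset.sum_mul_sum]
    exact Finset.sum_congr rfl fun i _ => Finset.sum_congr rfl fun j _ => by ring
  simp_rw [hstep]
  rw [integral_finset_sum _ (fun i _ =>
    integrable_finset_sum _ (fun j _ => ((hmul i j).const_mul _)))]
  refine Finset.sum_congr rfl fun i _ => ?_
  rw [integral_finset_sum _ (fun j _ => (hmul i j).const_mul _)]
  exact Finset.sum_congr rfl fun j _ => integral_const_mul _ _

lemma trace_nonneg_of_posSemidef {k : ℕ} {A : Matrix (Fin k) (Fin k) ℝ}
    (h : A.PosSemidef) : 0 ≤ A.trace :=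
  h.trace_nonneg

set_option maxHeartbeats 1000000 in
/-- Best linear unbiased estimate: among affine estimators `x̂⁺ = x̂⁻ + K (z − H x̂⁻)`,
i.e. among updated errors `e⁺ = (I − K H) e⁻ + K v`, the choice
`K* = P Hᵀ (H P Hᵀ + R)⁻¹` minimizes `E[‖e⁺‖²]` (Euclidean norm) whenever `e⁻` has
covariance `P`, `v` has covariance `R`, they are uncorrelated, and `H P Hᵀ + R` is
positive definite — regardless of the distributions of `e⁻` and `v`. -/
theorem optimal_gain_minimizes_mse {n m : ℕ} {Ω : Type*} [MeasurableSpace Ω]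
    (μ : Measure Ω) [IsProbabilityMeasure μ]
    (e : Ω → Fin n → ℝ) (v : Ω → Fin m → ℝ)
    (H : Matrix (Fin m) (Fin n) ℝ)
    (P : Matrix (Fin n) (Fin n) ℝ) (R : Matrix (Fin m) (Fin m) ℝ)
    (he2 : MemLp e 2 μ) (hv2 : MemLp v 2 μ)
    (hme : rvMean μ e = 0) (hce : rvCov μ e = P)
    (hmv : rvMean μ v = 0) (hcv : rvCov μ v = R)
    (huncorr : ∀ i j, ∫ ω, e ω i * v ω j ∂μ = 0)
    (hS : (H * P * Hᵀ + R).PosDef) :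
    ∀ K : Matrix (Fin n) (Fin m) ℝ,
      ∫ ω, ‖(WithLp.equiv 2 (Fin n → ℝ)).symm
              ((1 - (P * Hᵀ * (H * P * Hᵀ + R)⁻¹) * H).mulVec (e ω)
                + (P * Hᵀ * (H * P * Hᵀ + R)⁻¹).mulVec (v ω))‖ ^ 2 ∂μ
        ≤ ∫ ω, ‖(WithLp.equiv 2 (Fin n → ℝ)).symm
              ((1 - K * H).mulVec (e ω) + K.mulVec (v ω))‖ ^ 2 ∂μ := by
  intro K
  -- component moments
  have hei : ∀ i, MemLp (fun ω => e ω i) 2 μ := eval_memL2 he2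
  have hvi : ∀ i, MemLp (fun ω => v ω i) 2 μ := eval_memL2 hv2
  have hmei : ∀ i, ∫ ω, e ω i ∂μ = 0 := by
    intro i
    rw [integral_eval (he2.integrable one_le_two)]
    have := congrFun hme i
    simpa [rvMean] using this
  have hmvi : ∀ i, ∫ ω, v ω i ∂μ = 0 := by
    intro i
    rw [integral_eval (hv2.integrable one_le_two)]
    have := congrFun hmv i
    simpa [rvMean] using this
  have hEe : ∀ i j, ∫ ω, e ω i * v ω j ∂μ = 0 := huncorr
  have hPe : ∀ i j, ∫ ω, e ω i * e ω j ∂μ = P i j := by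
    intro i j
    have := congrFun (congrFun hce i) j
    simp only [rvCov, Matrix.of_apply, hme, Pi.zero_apply, sub_zero] at this
    exact this
  have hRv : ∀ i j, ∫ ω, v ω i * v ω j ∂μ = R i j := by
    intro i j
    have := congrFun (congrFun hcv i) j
    simp only [rvCov, Matrix.of_apply, hmv, Pi.zero_apply, sub_zero] at this
    exact this
  -- the combined random vector over the sum type
  set u : (Fin n ⊕ Fin m) → Ω → ℝ := Sum.elim (fun k ω => e ω k) (fun k ω => v ω k) with hu_def
  have hu : ∀ t, MemLp (u t) 2 μ := by
    rintro (k | k)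
    · exact hei k
    · exact hvi k
  -- the general mean-square formula
  have main : ∀ (A : Matrix (Fin n) (Fin n) ℝ) (B : Matrix (Fin n) (Fin m) ℝ),
      ∫ ω, ‖(WithLp.equiv 2 (Fin n → ℝ)).symm
              (A.mulVec (e ω) + B.mulVec (v ω))‖ ^ 2 ∂μ
        = (A * P * Aᵀ + B * R * Bᵀ).trace := by
    intro A B
    have hnorm : ∀ ω, ‖(WithLp.equiv 2 (Fin n → ℝ)).symm
            (A.mulVec (e ω) + B.mulVec (v ω))‖ ^ 2
        = ∑ i, (∑ t, Sum.elim (A i) (B i) t * u t ω) ^ 2 := by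
      intro ω
      rw [EuclideanSpace.norm_eq, Real.sq_sqrt (Finset.sum_nonneg fun i _ => sq_nonneg _)]
      refine Finset.sum_congr rfl fun i _ => ?_
      rw [Fintype.sum_sum_type]
      simp [Real.norm_eq_abs, sq_abs, Matrix.mulVec, dotProduct, u]
    simp_rw [hnorm]
    rw [integral_finset_sum]
    · have hterm : ∀ i : Fin n,
          ∫ ω, (∑ t, Sum.elim (A i) (B i) t * u t ω) ^ 2 ∂μ
            = (A * P * Aᵀ) i i + (B * R * Bᵀ) i i := by
        intro i
        rw [integral_sq_sum μ u hu (Sum.elim (A i) (B i))]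
        rw [Fintype.sum_sum_type]
        have h1 : ∀ k : Fin n, (∑ t, Sum.elim (A i) (B i) (Sum.inl k) * Sum.elim (A i) (B i) t
            * ∫ ω, u (Sum.inl k) ω * u t ω ∂μ) = ∑ l, A i k * A i l * P k l := by
          intro k
          rw [Fintype.sum_sum_type]
          simp [u, hPe, hEe]
        have h2 : ∀ k : Fin m, (∑ t, Sum.elim (A i) (B i) (Sum.inr k) * Sum.elim (A i) (B i) t
            * ∫ ω, u (Sum.inr k) ω * u t ω ∂μ) = ∑ l, B i k * B i l * R k l := by
          intro k
          rw [Fintype.sum_sum_type]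
          have hvE : ∀ l, ∫ ω, v ω k * e ω l ∂μ = 0 := by
            intro l
            rw [show (fun ω => v ω k * e ω l) = fun ω => e ω l * v ω k from
              funext fun ω => mul_comm _ _]
            exact hEe l k
          simp [u, hRv, hvE]
        simp_rw [h1, h2]
        have hA : (A * P * Aᵀ) i i = ∑ k, ∑ l, A i k * A i l * P k l := by
          simp only [Matrix.mul_apply, Matrix.transpose_apply, Finset.sum_mul]
          rw [Finset.sum_comm]
          exact Finset.sum_congr rfl fun k _ => Finset.sum_congr rfl fun l _ => by ring
        have hB : (B * R * Bᵀ) i i = ∑ k, ∑ l, B i k * B i l * R k l := by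
          simp only [Matrix.mul_apply, Matrix.transpose_apply, Finset.sum_mul]
          rw [Finset.sum_comm]
          exact Finset.sum_congr rfl fun k _ => Finset.sum_congr rfl fun l _ => by ring
        rw [hA, hB]
      simp_rw [hterm]
      simp [Matrix.trace, Matrix.diag, Finset.sum_add_distrib]
    · intro i _
      have hmem : MemLp (fun ω => ∑ t, Sum.elim (A i) (B i) t * u t ω) 2 μ := by
        have heq : (fun ω => ∑ t, Sum.elim (A i) (B i) t * u t ω)
            = ∑ t : Fin n ⊕ Fin m, fun ω => Sum.elim (A i) (B i) t * u t ω := by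
          funext ω; simp [Finset.sum_apply]
        rw [heq]
        exact memLp_finset_sum' Finset.univ
          (fun t _ => (hu t).const_mul (Sum.elim (A i) (B i) t))
      exact hmem.integrable_sq
  rw [main (1 - P * Hᵀ * (H * P * Hᵀ + R)⁻¹ * H) (P * Hᵀ * (H * P * Hᵀ + R)⁻¹),
      main (1 - K * H) K]
  obtain ⟨S, hSdef⟩ : ∃ S', S' = H * P * Hᵀ + R := ⟨_, rfl⟩
  rw [← hSdef] at hS ⊢
  obtain ⟨Ks, hKsdef⟩ : ∃ Ks', Ks' = P * Hᵀ * S⁻¹ := ⟨_, rfl⟩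
  rw [← hKsdef]
  have hPt : Pᵀ = P := by
    rw [← hce]
    ext i j
    simp only [rvCov, transpose_apply, Matrix.of_apply]
    exact integral_congr_ae (Filter.Eventually.of_forall fun ω => mul_comm _ _)
  have hSt : Sᵀ = S := by
    rw [← conjTranspose_eq_transpose_of_trivial]
    exact hS.isHermitian
  have hdet : IsUnit S.det := hS.det_pos.ne'.isUnit
  have hS1 : S * S⁻¹ = 1 := Matrix.mul_nonsing_inv S hdet
  have hS2 : S⁻¹ * S = 1 := Matrix.nonsing_inv_mul S hdet
  have hSinvT : S⁻¹ᵀ = S⁻¹ := by rw [Matrix.transpose_nonsing_inv, hSt]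
  have hKst : Ksᵀ = S⁻¹ * H * P := by
    rw [hKsdef, Matrix.transpose_mul, Matrix.transpose_mul, hSinvT, hPt,
      Matrix.transpose_transpose, Matrix.mul_assoc]
  have hKsS : Ks * S = P * Hᵀ := by rw [hKsdef, Matrix.mul_assoc, hS2, Matrix.mul_one]
  have hSKst : S * Ksᵀ = H * P := by
    rw [hKst, ← Matrix.mul_assoc, ← Matrix.mul_assoc, hS1, Matrix.one_mul]
  have hR : R = S - H * P * Hᵀ := by rw [hSdef, add_sub_cancel_left]
  have hMS : ∀ M : Matrix (Fin n) (Fin m) ℝ,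
      M * S * Mᵀ = M * (H * P * Hᵀ) * Mᵀ + M * R * Mᵀ := by
    intro M
    rw [hSdef, Matrix.mul_add, Matrix.add_mul]
  have expand : ∀ M : Matrix (Fin n) (Fin m) ℝ,
      (1 - M * H) * P * (1 - M * H)ᵀ + M * R * Mᵀ
        = P - M * (H * P) - (P * Hᵀ) * Mᵀ + (M * (H * P * Hᵀ) * Mᵀ + M * R * Mᵀ) := by
    intro M
    have ht : (1 - M * H)ᵀ = 1 - Hᵀ * Mᵀ := by
      rw [Matrix.transpose_sub, Matrix.transpose_one, Matrix.transpose_mul]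
    rw [ht]
    simp only [Matrix.sub_mul, Matrix.mul_sub, Matrix.one_mul, Matrix.mul_one, Matrix.mul_assoc]
    abel
  have hDelta : (K - Ks) * S * (K - Ks)ᵀ
      = K * S * Kᵀ - K * (H * P) - (P * Hᵀ) * Kᵀ + (P * Hᵀ) * Ksᵀ := by
    have e1 : (K - Ks) * S = K * S - P * Hᵀ := by rw [Matrix.sub_mul, hKsS]
    have e2 : K * S * Ksᵀ = K * (H * P) := by rw [Matrix.mul_assoc, hSKst]
    rw [e1, Matrix.transpose_sub, Matrix.mul_sub, Matrix.sub_mul, Matrix.sub_mul, e2]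
    abel
  have hKsHP : Ks * (H * P) = (P * Hᵀ) * Ksᵀ := by
    rw [← hSKst, ← Matrix.mul_assoc, hKsS]
  have hKsSKs : Ks * S * Ksᵀ = (P * Hᵀ) * Ksᵀ := by rw [hKsS]
  have hpos : 0 ≤ ((K - Ks) * S * (K - Ks)ᵀ).trace := by
    apply trace_nonneg_of_posSemidef
    have := hS.posSemidef.mul_mul_conjTranspose_same (K - Ks)
    rwa [conjTranspose_eq_transpose_of_trivial] at this
  rw [expand K, expand Ks]
  simp only [Matrix.trace_add, Matrix.trace_sub]
  have hd := congrArg Matrix.trace hDelta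
  simp only [Matrix.trace_add, Matrix.trace_sub] at hd
  have h1 := congrArg Matrix.trace hKsHP
  have h2 := congrArg Matrix.trace hKsSKs
  have h3 := congrArg Matrix.trace (hMS K)
  have h4 := congrArg Matrix.trace (hMS Ks)
  simp only [Matrix.trace_add] at h3 h4
  linarith [hpos, hd, h1, h2, h3, h4]
end
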